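/- Let P and Q be monic complex polynomials with deg P = m + 1 and deg Q = 2m + 2, and suppose deg(P² - Q) ≤ n + 1 for some integer n ≤ 2m - 1. Then for every j with 1 ≤ j ≤ 2m - n, the j-th power sum of the roots of P² counted with multiplicity equals the j-th power sum of the roots of Q counted with multiplicity; that is, 2·∑_{r : P(r)=0} mult_P(r)·r^j = ∑_{r : Q(r)=0} mult_Q(r)·r^j. -/

import Mathlib

open Polynomial Finset

noncomputable def msum (s : Multiset ℂ) (j : ℕ) : ℂ := (s.map (· ^ j)).sum

theorem newton_multiset (s : Multiset ℂ) (k : ℕ) (hk : 0 < k) :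
    msum s k = (-1) ^ (k + 1) * k * s.esymm k -
      ∑ a ∈ (Finset.HasAntidiagonal.antidiagonal k).filter (fun a => a.1 ∈ Set.Ioo 0 k),
        (-1) ^ a.1 * s.esymm a.1 * msum s a.2 := by
  classical
  set l := s.toList with hl
  have hs : (Finset.univ.val.map l.get : Multiset ℂ) = s := by
    have h1 : (Finset.univ : Finset (Fin l.length)).val = ↑(List.finRange l.length) := by
      simp [Finset.univ, Fintype.elems, List.finRange]
    rw [h1]
    rw [show Multiset.map l.get ↑(List.finRange l.length) = ((List.finRange l.length).map l.get : Multiset ℂ) from rfl, List.map_get_finRange, hl, Multiset.coe_toList]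
  have key := MvPolynomial.psum_eq_mul_esymm_sub_sum (Fin l.length) ℂ k hk
  have happ := congrArg (MvPolynomial.aeval l.get) key
  have hps : ∀ i : ℕ, MvPolynomial.aeval l.get (MvPolynomial.psum (Fin l.length) ℂ i) = msum s i := by
    intro i
    rw [MvPolynomial.psum, map_sum]
    simp only [map_pow, MvPolynomial.aeval_X]
    rw [msum, ← hs, Multiset.map_map]
    rfl
  have hes : ∀ i : ℕ, MvPolynomial.aeval l.get (MvPolynomial.esymm (Fin l.length) ℂ i) = s.esymm i := by
    intro i
    rw [MvPolynomial.aeval_esymm_eq_multiset_esymm, hs]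
  rw [map_sub, map_mul, map_mul, map_pow, map_neg, map_one, map_natCast, map_sum] at happ
  simp only [map_mul, map_pow, map_neg, map_one, hps, hes] at happ
  exact happ

lemma msum_toFinset (p : ℂ[X]) (j : ℕ) :
    msum p.roots j = ∑ r ∈ p.roots.toFinset, (p.rootMultiplicity r : ℂ) * r ^ j := by
  classical
  rw [msum, Finset.sum_multiset_map_count]
  refine Finset.sum_congr rfl fun r hr => ?_
  rw [count_roots, nsmul_eq_mul]


/-- If `P, Q` are monic complex polynomials with `deg P = m+1`, `deg Q = 2m+2`, and
`deg(P² - Q) ≤ n + 1` for some `n ≤ 2m - 1`, then for `1 ≤ j ≤ 2m - n` the `j`-th power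
sums of the roots (with multiplicity) of `P²` and of `Q` coincide:
`2·∑_{P(r)=0} mult_P(r)·rʲ = ∑_{Q(r)=0} mult_Q(r)·rʲ`. -/
theorem power_sums_coincide
    (m n : ℕ) (hn : n + 1 ≤ 2 * m) (P Q : ℂ[X])
    (hPm : P.Monic) (hQm : Q.Monic)
    (hP : P.natDegree = m + 1) (hQ : Q.natDegree = 2 * m + 2)
    (hdeg : (P ^ 2 - Q).degree ≤ ((n + 1 : ℕ) : WithBot ℕ)) :
    ∀ j : ℕ, 1 ≤ j → j ≤ 2 * m - n →
      2 * ∑ r ∈ P.roots.toFinset, (P.rootMultiplicity r : ℂ) * r ^ j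
        = ∑ r ∈ Q.roots.toFinset, (Q.rootMultiplicity r : ℂ) * r ^ j := by
  classical
  have hP2m : (P ^ 2).Monic := hPm.pow 2
  have hP2deg : (P ^ 2).natDegree = 2 * m + 2 := by
    rw [natDegree_pow, hP]; ring
  have hcoeff : ∀ k : ℕ, n + 2 ≤ k → (P ^ 2).coeff k = Q.coeff k := by
    intro k hk
    have h0 : (P ^ 2 - Q).coeff k = 0 := by
      apply coeff_eq_zero_of_degree_lt
      refine lt_of_le_of_lt hdeg ?_
      exact_mod_cast Nat.lt_of_lt_of_le (Nat.lt_succ_self (n + 1)) hk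
    have := sub_eq_zero.mp (by rwa [coeff_sub] at h0)
    exact this
  have hesymm : ∀ k : ℕ, k ≤ 2 * m - n → (P ^ 2).roots.esymm k = Q.roots.esymm k := by
    intro k hk
    have hk2 : k ≤ 2 * m + 2 := le_trans hk (by omega)
    have hkc : n + 2 ≤ 2 * m + 2 - k := by omega
    have h1 := Polynomial.coeff_eq_esymm_roots_of_splits
      (IsAlgClosed.splits (P ^ 2))
      (show 2 * m + 2 - k ≤ (P ^ 2).natDegree by omega)
    have h2 := Polynomial.coeff_eq_esymm_roots_of_splits
      (IsAlgClosed.splits Q)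
      (show 2 * m + 2 - k ≤ Q.natDegree by omega)
    rw [hP2m.leadingCoeff, hP2deg] at h1
    rw [hQm.leadingCoeff, hQ] at h2
    have hkk : 2 * m + 2 - (2 * m + 2 - k) = k := by omega
    rw [hkk] at h1 h2
    have hc := hcoeff (2 * m + 2 - k) hkc
    rw [h1, h2] at hc
    have hne : ((-1 : ℂ)) ^ k ≠ 0 := pow_ne_zero _ (by norm_num)
    simp only [one_mul] at hc
    exact mul_left_cancel₀ hne hc
  have hmsum : ∀ j : ℕ, 1 ≤ j → j ≤ 2 * m - n →
      msum (P ^ 2).roots j = msum Q.roots j := by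
    intro j
    induction j using Nat.strong_induction_on with
    | _ j ih =>
      intro hj1 hj2
      rw [newton_multiset _ j hj1, newton_multiset _ j hj1, hesymm j hj2]
      congr 1
      refine Finset.sum_congr rfl fun a ha => ?_
      simp only [Finset.mem_filter, Finset.HasAntidiagonal.mem_antidiagonal, Set.mem_Ioo] at ha
      obtain ⟨hsum, h0, hlt⟩ := ha
      rw [hesymm a.1 (by omega), ih a.2 (by omega) (by omega) (by omega)]
  intro j hj1 hj2
  have key := hmsum j hj1 hj2
  have hroots : (P ^ 2).roots = 2 • P.roots := roots_pow P 2
  rw [hroots] at key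
  have : msum (2 • P.roots) j = 2 * msum P.roots j := by
    rw [two_nsmul, msum, Multiset.map_add, Multiset.sum_add, two_mul, msum]
  rw [this, msum_toFinset, msum_toFinset] at key
  exact key
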